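/- Suppose n > n₁ ≥ 2 and m > m₁ ≥ 0 are integers with F_n - F_{n₁} = 3^m - 3^{m₁} and n ≥ 300. Then |((α^{n-n₁} - 1)/(√5·(3^{m-m₁} - 1)))·α^{n₁}·3^{-m₁} - 1| < α^{4-n}, where α = (1+√5)/2. -/

import Mathlib

set_option maxHeartbeats 1000000 in
theorem lambda3_bound (n n₁ m m₁ : ℕ)
    (hn₁ : 2 ≤ n₁) (hn : n₁ < n) (hm : m₁ < m) (hn300 : 300 ≤ n)
    (heq : (Nat.fib n : ℤ) - Nat.fib n₁ = 3 ^ m - 3 ^ m₁) :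
    |((((1 + Real.sqrt 5) / 2) ^ (n - n₁) - 1) / (Real.sqrt 5 * ((3 : ℝ) ^ (m - m₁) - 1))) *
        ((1 + Real.sqrt 5) / 2) ^ n₁ * (3 : ℝ) ^ (-(m₁ : ℤ)) - 1| <
      ((1 + Real.sqrt 5) / 2) ^ ((4 : ℤ) - n) := by
  have hs2 : Real.sqrt 5 ^ 2 = 5 := Real.sq_sqrt (by norm_num)
  have hs0 : 0 < Real.sqrt 5 := Real.sqrt_pos.mpr (by norm_num)
  have hsl : 2 < Real.sqrt 5 := by nlinarith
  have hsu : Real.sqrt 5 < 3 := by nlinarith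
  set s := Real.sqrt 5 with hsdef
  set a := (1 + s)/2 with hadef
  set c := (s - 1)/2 with hcdef
  have ha1 : (1:ℝ) < a := by rw [hadef]; linarith
  have ha0 : (0:ℝ) < a := by linarith
  have hc0 : (0:ℝ) ≤ c := by rw [hcdef]; linarith
  have hc1 : c ≤ 1 := by rw [hcdef]; linarith
  set b := (1 - s)/2 with hbdef
  have hbc : b = -c := by rw [hbdef, hcdef]; ring
  have hfib : ∀ k : ℕ, (Nat.fib k : ℝ) = (a ^ k - b ^ k) / s :=
    fun k => Real.coe_fib_eq k
  have heqR : (Nat.fib n : ℝ) - Nat.fib n₁ = 3 ^ m - 3 ^ m₁ := by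
    exact_mod_cast congrArg (fun z : ℤ => (z : ℝ)) heq
  set D := s * ((3:ℝ) ^ m - 3 ^ m₁) with hDdef
  have h3m : (3:ℝ) ^ m₁ < 3 ^ m := pow_lt_pow_right₀ (by norm_num) hm
  have hD0 : 0 < D := by apply mul_pos hs0; linarith
  have hkey : a ^ n - b ^ n - (a ^ n₁ - b ^ n₁) = D := by
    have h1 := hfib n
    have h2 := hfib n₁
    rw [h1, h2] at heqR
    field_simp at heqR
    rw [hDdef]; linarith [heqR]
  have h3j : (1:ℝ) < (3:ℝ) ^ (m - m₁) := one_lt_pow₀ (by norm_num) (by omega)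
  have h3m₁ : (0:ℝ) < (3:ℝ) ^ m₁ := by positivity
  have hE : (((a ^ (n - n₁) - 1) / (s * ((3 : ℝ) ^ (m - m₁) - 1))) * a ^ n₁ *
      (3 : ℝ) ^ (-(m₁ : ℤ)) - 1) = (b ^ n - b ^ n₁) / D := by
    have h1 : a ^ (n - n₁) * a ^ n₁ = a ^ n := by
      rw [← pow_add]; congr 1; omega
    have h2 : (3:ℝ) ^ (m - m₁) * 3 ^ m₁ = 3 ^ m := by
      rw [← pow_add]; congr 1; omega
    have h3 : ((3:ℝ)) ^ (-(m₁ : ℤ)) = ((3:ℝ) ^ m₁)⁻¹ := by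
      rw [zpow_neg, zpow_natCast]
    have hden : s * ((3:ℝ) ^ (m - m₁) - 1) * 3 ^ m₁ = D := by
      rw [hDdef, ← h2]; ring
    have hden0 : s * ((3:ℝ) ^ (m - m₁) - 1) ≠ 0 := ne_of_gt (mul_pos hs0 (by linarith))
    have hstep : ((a ^ (n - n₁) - 1) / (s * ((3 : ℝ) ^ (m - m₁) - 1))) * a ^ n₁ *
        ((3:ℝ) ^ m₁)⁻¹ = (a ^ n - a ^ n₁) / D := by
      rw [eq_div_iff hD0.ne', ← hden, ← h1]
      field_simp [sub_ne_zero.mpr h3j.ne']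
    rw [h3, hstep, eq_div_iff hD0.ne', sub_mul, div_mul_cancel₀ _ hD0.ne']
    linarith [hkey]
  rw [hE, abs_div, abs_of_pos hD0]
  -- numerator bound
  have habs : ∀ k : ℕ, 2 ≤ k → |b ^ k| ≤ c ^ 2 := by
    intro k hk
    rw [hbc, abs_pow, abs_neg, abs_of_nonneg hc0]
    exact pow_le_pow_of_le_one hc0 hc1 hk
  have hNb : |b ^ n - b ^ n₁| ≤ 2 * c ^ 2 := by
    calc |b ^ n - b ^ n₁| ≤ |b ^ n| + |b ^ n₁| := abs_sub _ _
    _ ≤ c ^ 2 + c ^ 2 := add_le_add (habs n (by omega)) (habs n₁ hn₁)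
    _ = 2 * c ^ 2 := by ring
  -- denominator lower bound
  have hfible : (Nat.fib (n - 2) : ℝ) ≤ (3:ℝ) ^ m - 3 ^ m₁ := by
    rw [← heqR]
    have h1 : Nat.fib (n - 2) + Nat.fib n₁ ≤ Nat.fib n := by
      have h2 : Nat.fib n = Nat.fib (n - 2) + Nat.fib (n - 1) := by
        conv_lhs => rw [show n = n - 2 + 2 by omega]
        rw [Nat.fib_add_two, show n - 2 + 1 = n - 1 from by omega]
      have h4 : Nat.fib n₁ ≤ Nat.fib (n - 1) := Nat.fib_mono (by omega)
      omega
    have := (Nat.cast_le (α := ℝ)).mpr h1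
    push_cast at this
    linarith
  have hDb : a ^ (n - 2) - 1 ≤ D := by
    have h1 : s * (Nat.fib (n - 2) : ℝ) = a ^ (n - 2) - b ^ (n - 2) := by
      rw [hfib (n - 2)]; field_simp
    have h2 : b ^ (n - 2) ≤ 1 := by
      calc b ^ (n - 2) ≤ |b ^ (n - 2)| := le_abs_self _
      _ ≤ c ^ 2 := habs (n - 2) (by omega)
      _ ≤ 1 := by nlinarith
    have h3 : s * (Nat.fib (n - 2) : ℝ) ≤ D := by
      rw [hDdef]
      exact mul_le_mul_of_nonneg_left hfible hs0.le
    linarith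
  -- final comparison
  have hrhs : a ^ ((4 : ℤ) - n) = a ^ 4 / a ^ n := by
    rw [zpow_sub₀ ha0.ne', zpow_natCast]
    norm_num [zpow_ofNat]
  rw [hrhs, div_lt_div_iff₀ hD0 (by positivity)]
  have hgap : a ^ 2 - 2 * c ^ 2 = (3 * s - 3) / 2 := by
    rw [hadef, hcdef]
    linear_combination (-(1:ℝ)/4) * hs2
  have hpow : a ^ 4 * a ^ (n - 2) = a ^ 2 * a ^ n := by
    rw [← pow_add, ← pow_add]; congr 1; omega
  have han4 : a ^ 4 < a ^ n := pow_lt_pow_right₀ ha1 (by omega)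
  have hapn : (0:ℝ) < a ^ n := by positivity
  have ha4 : (0:ℝ) < a ^ 4 := by positivity
  have u1 : a ^ 2 * a ^ n - a ^ 4 ≤ a ^ 4 * D := by
    have h := mul_le_mul_of_nonneg_left hDb ha4.le
    rw [mul_sub, mul_one, hpow] at h
    linarith
  have u2 : |b ^ n - b ^ n₁| * a ^ n ≤ 2 * c ^ 2 * a ^ n :=
    mul_le_mul_of_nonneg_right hNb hapn.le
  have u3 : 2 * c ^ 2 * a ^ n = a ^ 2 * a ^ n - (3 * s - 3) / 2 * a ^ n := by
    linear_combination (-(a ^ n)) * hgap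
  have u4 : a ^ 4 < (3 * s - 3) / 2 * a ^ n := by
    linarith [han4, hapn, mul_le_mul_of_nonneg_right hsl.le hapn.le]
  linarith
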